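/- Let Q be the orbit space of the gauge action of G^V on G^E, with quotient map ρ : G^E → Q, equipped with the quotient σ-algebra (a subset of Q is measurable iff its preimage under ρ is measurable) and the pushforward measure ρ_*(μ^E). Then f ↦ f∘ρ is a linear isometry from L²(Q, ρ_*(μ^E)) into L²(G^E, μ^E) whose range is exactly the closed subspace of gauge-invariant elements {h ∈ L²(G^E, μ^E) : h∘(g·) = h for every g ∈ G^V}. -/

import Mathlib

open MeasureTheory

/-- The gauge action of `g : V → G` on connections `A : E → G`:
`(g·A)(e) = g(t(e))·A(e)·g(s(e))⁻¹`. -/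
def gaugeAct {V E G : Type*} [Group G] (s t : E → V) (g : V → G) (A : E → G) : E → G :=
  fun e => g (t e) * A e * (g (s e))⁻¹

/-- On a compact group, any Haar probability measure is right invariant. -/
lemma haar_isMulRightInvariant {G : Type*} [Group G] [TopologicalSpace G] [IsTopologicalGroup G]
    [CompactSpace G] [MeasurableSpace G] [BorelSpace G]
    (μ : Measure G) [μ.IsHaarMeasure] [IsProbabilityMeasure μ] :
    μ.IsMulRightInvariant := by
  constructor
  intro g
  haveI : IsProbabilityMeasure (Measure.map (· * g) μ) :=
    Measure.isProbabilityMeasure_map (measurable_mul_const g).aemeasurable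
  haveI : (Measure.map (· * g) μ).IsOpenPosMeasure := by
    constructor
    intro U hU hne
    rw [Measure.map_apply (measurable_mul_const g) hU.measurableSet]
    refine ((hU.preimage (continuous_mul_right g)).measure_pos μ ?_).ne'
    obtain ⟨u, hu⟩ := hne
    exact ⟨u * g⁻¹, by simpa using hu⟩
  haveI : (Measure.map (· * g) μ).IsHaarMeasure := { }
  exact Measure.isHaarMeasure_eq_of_isProbabilityMeasure _ μ

/-- Composition of gauge transformations. -/
lemma gaugeAct_mul {V E G : Type*} [Group G] (s t : E → V) (g g₀ : V → G) (A : E → G) :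
    gaugeAct s t g (gaugeAct s t g₀ A) = gaugeAct s t (g * g₀) A := by
  funext e
  simp only [gaugeAct, Pi.mul_apply, mul_inv_rev]
  group

set_option maxHeartbeats 2000000 in
theorem stmt15 {G : Type*} [Group G] [TopologicalSpace G] [IsTopologicalGroup G]
    [CompactSpace G] [SecondCountableTopology G] [MeasurableSpace G] [BorelSpace G]
    (μ : Measure G) [μ.IsHaarMeasure] [IsProbabilityMeasure μ]
    {V E : Type*} [Fintype V] [Fintype E] (s t : E → V)
    (r : Setoid (E → G))
    (hr : ∀ A B : E → G, r A B ↔ ∃ g : V → G, B = gaugeAct s t g A) :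
    ∃ T : Lp ℂ 2 (Measure.map (Quotient.mk r) (Measure.pi fun _ : E => μ)) →ₗᵢ[ℂ]
        Lp ℂ 2 (Measure.pi fun _ : E => μ),
      (∀ f, ⇑(T f) =ᵐ[Measure.pi fun _ : E => μ] ⇑f ∘ Quotient.mk r) ∧
      Set.range (fun f => T f) =
        {h : Lp ℂ 2 (Measure.pi fun _ : E => μ) |
          ∀ g : V → G, ⇑h ∘ gaugeAct s t g =ᵐ[Measure.pi fun _ : E => μ] ⇑h} := by
  haveI : μ.IsMulRightInvariant := haar_isMulRightInvariant μ
  set ν : Measure (E → G) := Measure.pi fun _ : E => μ with hν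
  set κ : Measure (V → G) := Measure.pi fun _ : V => μ with hκ
  haveI : IsProbabilityMeasure ν := inferInstanceAs (IsProbabilityMeasure (Measure.pi fun _ : E => μ))
  haveI : IsProbabilityMeasure κ := inferInstanceAs (IsProbabilityMeasure (Measure.pi fun _ : V => μ))
  haveI : κ.IsMulRightInvariant := inferInstanceAs (Measure.pi fun _ : V => μ).IsMulRightInvariant
  -- the quotient map is measure preserving onto the pushforward measure
  have hmk : Measurable (Quotient.mk r) := measurable_quotient_mk'' (s := r)
  have hρ : MeasurePreserving (Quotient.mk r) ν (Measure.map (Quotient.mk r) ν) :=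
    ⟨hmk, rfl⟩
  -- each gauge transformation is measure preserving
  have mpg : ∀ g : V → G, MeasurePreserving (gaugeAct s t g) ν ν := fun g =>
    measurePreserving_pi _ _ (fun e =>
      (measurePreserving_mul_right μ (g (s e))⁻¹).comp (measurePreserving_mul_left μ (g (t e))))
  -- the quotient map identifies gauge-related connections
  have hmk_gauge : ∀ (g : V → G) (A : E → G),
      Quotient.mk r (gaugeAct s t g A) = Quotient.mk r A :=
    fun g A => (Quotient.sound ((hr A _).mpr ⟨g, rfl⟩)).symm
  refine ⟨Lp.compMeasurePreservingₗᵢ ℂ (Quotient.mk r) hρ,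
    fun f => Lp.coeFn_compMeasurePreserving f hρ, ?_⟩
  ext h
  simp only [Set.mem_range, Set.mem_setOf_eq]
  constructor
  · rintro ⟨f, rfl⟩ g
    have h1 : ⇑(Lp.compMeasurePreservingₗᵢ ℂ (Quotient.mk r) hρ f) =ᵐ[ν] ⇑f ∘ Quotient.mk r :=
      Lp.coeFn_compMeasurePreserving f hρ
    have h2 : (⇑f ∘ Quotient.mk r) ∘ gaugeAct s t g = ⇑f ∘ Quotient.mk r := by
      funext A
      simp only [Function.comp_apply, hmk_gauge g A]
    calc ⇑(Lp.compMeasurePreservingₗᵢ ℂ (Quotient.mk r) hρ f) ∘ gaugeAct s t g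
        =ᵐ[ν] (⇑f ∘ Quotient.mk r) ∘ gaugeAct s t g :=
          (mpg g).quasiMeasurePreserving.ae_eq_comp h1
      _ = ⇑f ∘ Quotient.mk r := h2
      _ =ᵐ[ν] _ := h1.symm
  · intro hinv
    -- choose a measurable representative of h
    have hae : AEMeasurable (⇑h) ν := (Lp.aestronglyMeasurable h).aemeasurable
    set h' : (E → G) → ℂ := hae.mk ⇑h with hh'
    have h'meas : Measurable h' := hae.measurable_mk
    have h'eq : ⇑h =ᵐ[ν] h' := hae.ae_eq_mk
    -- the joint action map is measurable
    have φmeas : Measurable (fun p : (V → G) × (E → G) => gaugeAct s t p.1 p.2) := by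
      apply measurable_pi_lambda
      intro e
      exact (((measurable_pi_apply (t e)).comp measurable_fst).mul
        ((measurable_pi_apply e).comp measurable_snd)).mul
        (((measurable_pi_apply (s e)).comp measurable_fst).inv
          : Measurable fun p : (V → G) × (E → G) => (p.1 (s e))⁻¹)
    -- averaged function
    set H : (E → G) → ℂ := fun A => ∫ g, h' (gaugeAct s t g A) ∂κ with hH
    have Fsm : StronglyMeasurable (fun p : (V → G) × (E → G) => h' (gaugeAct s t p.1 p.2)) :=
      (h'meas.comp φmeas).stronglyMeasurable
    have Hsm : StronglyMeasurable H := Fsm.integral_prod_left'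
    -- `H` is genuinely gauge invariant
    have Hinv : ∀ (g₀ : V → G) (A : E → G), H (gaugeAct s t g₀ A) = H A := by
      intro g₀ A
      have : ∀ g : V → G, h' (gaugeAct s t g (gaugeAct s t g₀ A)) =
          (fun x : V → G => h' (gaugeAct s t x A)) (g * g₀) := by
        intro g; rw [gaugeAct_mul]
      calc H (gaugeAct s t g₀ A) = ∫ g, (fun x : V → G => h' (gaugeAct s t x A)) (g * g₀) ∂κ := by
            simp only [hH]; exact integral_congr_ae (Filter.Eventually.of_forall this)
        _ = ∫ g, h' (gaugeAct s t g A) ∂κ := integral_mul_right_eq_self (μ := κ) (fun x : V → G => h' (gaugeAct s t x A)) g₀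
        _ = H A := rfl
    -- per-g vanishing of the discrepancy
    have inner0 : ∀ g : V → G,
        ∫⁻ A, (‖h' (gaugeAct s t g A) - h' A‖₊ : ENNReal) ∂ν = 0 := by
      intro g
      have e1 : (fun A => h' (gaugeAct s t g A)) =ᵐ[ν] (fun A => (⇑h) (gaugeAct s t g A)) :=
        (mpg g).quasiMeasurePreserving.ae_eq_comp h'eq.symm
      have e2 : (fun A => (⇑h) (gaugeAct s t g A)) =ᵐ[ν] ⇑h := hinv g
      have hz : (fun A => (‖h' (gaugeAct s t g A) - h' A‖₊ : ENNReal)) =ᵐ[ν]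
          (fun _ => (0 : ENNReal)) := by
        filter_upwards [e1, e2, h'eq] with A hA1 hA2 hA3
        simp [hA1, hA2, ← hA3]
      rw [lintegral_congr_ae hz, lintegral_zero]
    -- Fubini: for a.e. A the discrepancy vanishes in g
    have Dmeas : Measurable (fun p : (V → G) × (E → G) =>
        (‖h' (gaugeAct s t p.1 p.2) - h' p.2‖₊ : ENNReal)) :=
      ((h'meas.comp φmeas).sub (h'meas.comp measurable_snd)).enorm
    have key2 : ∀ᵐ A ∂ν, ∫⁻ g, (‖h' (gaugeAct s t g A) - h' A‖₊ : ENNReal) ∂κ = 0 := by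
      have swap := lintegral_lintegral_swap (μ := κ) (ν := ν)
        (f := fun g A => (‖h' (gaugeAct s t g A) - h' A‖₊ : ENNReal)) Dmeas.aemeasurable
      have hz : ∫⁻ A, ∫⁻ g, (‖h' (gaugeAct s t g A) - h' A‖₊ : ENNReal) ∂κ ∂ν = 0 := by
        rw [← swap]; simp [inner0]
      have hmeasA : Measurable (fun A => ∫⁻ g,
          (‖h' (gaugeAct s t g A) - h' A‖₊ : ENNReal) ∂κ) := Dmeas.lintegral_prod_left'
      have := (lintegral_eq_zero_iff hmeasA).1 hz
      filter_upwards [this] with A hA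
      simpa using hA
    -- hence `H = h'` a.e.
    have Haeh' : H =ᵐ[ν] h' := by
      filter_upwards [key2] with A hA
      have hmeasg : Measurable (fun g : V → G =>
          (‖h' (gaugeAct s t g A) - h' A‖₊ : ENNReal)) :=
        ((h'meas.comp (measurable_pi_lambda _ (fun e =>
          ((measurable_pi_apply (t e)).mul measurable_const).mul
            (measurable_pi_apply (s e)).inv))).sub measurable_const).enorm
      have hg0 : ∀ᵐ g ∂κ, h' (gaugeAct s t g A) = h' A := by
        filter_upwards [(lintegral_eq_zero_iff hmeasg).1 hA] with g hg
        have : (‖h' (gaugeAct s t g A) - h' A‖₊ : ENNReal) = 0 := by simpa using hg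
        have : ‖h' (gaugeAct s t g A) - h' A‖₊ = 0 := by exact_mod_cast this
        rw [← sub_eq_zero]
        simpa using this
      calc H A = ∫ _g, h' A ∂κ := integral_congr_ae hg0
        _ = h' A := by simp
    have Haeh : H =ᵐ[ν] ⇑h := Haeh'.trans h'eq.symm
    -- descend `H` to the quotient
    have hwd : ∀ A B : E → G, r A B → H A = H B := by
      intro A B hAB
      obtain ⟨g, rfl⟩ := (hr A B).1 hAB
      exact (Hinv g A).symm
    set fQ : Quotient r → ℂ := Quotient.lift H hwd with hfQ
    have hfQmeas : Measurable fQ := by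
      rw [measurable_from_quotient]
      exact Hsm.measurable
    have hfQcomp : fQ ∘ Quotient.mk r = H := rfl
    have hfQmem : MemLp fQ 2 (Measure.map (Quotient.mk r) ν) := by
      rw [memLp_map_measure_iff hfQmeas.aestronglyMeasurable hmk.aemeasurable, hfQcomp]
      exact (Lp.memLp h).ae_eq Haeh.symm
    refine ⟨hfQmem.toLp fQ, ?_⟩
    apply Lp.ext
    calc ⇑(Lp.compMeasurePreservingₗᵢ ℂ (Quotient.mk r) hρ (hfQmem.toLp fQ))
        =ᵐ[ν] ⇑(hfQmem.toLp fQ) ∘ Quotient.mk r := Lp.coeFn_compMeasurePreserving _ hρ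
      _ =ᵐ[ν] fQ ∘ Quotient.mk r := hρ.quasiMeasurePreserving.ae_eq_comp hfQmem.coeFn_toLp
      _ = H := hfQcomp
      _ =ᵐ[ν] ⇑h := Haeh
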